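/- A subset A of a group G is sparse if and only if for every free ultrafilter p on G, the set Δ_p(A) = {g ∈ G : A ∈ g·p} is finite. -/

import Mathlib

open Pointwise

def Sparse {G : Type*} [Group G] (A : Set G) : Prop :=
  ∀ X : Set G, X.Infinite → ∃ F : Finset G, F.Nonempty ∧ ↑F ⊆ X ∧
    (⋂ g ∈ F, (g • A : Set G)).Finite

def companion {G : Type*} [Group G] (p : Ultrafilter G) (A : Set G) : Set G :=
  {g : G | (g⁻¹ • A : Set G) ∈ p}

/-- `A` is sparse iff `Δ_p(A)` is finite for every free ultrafilter `p`. -/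
theorem sparse_iff_companions_finite {G : Type*} [Group G] [Infinite G] (A : Set G) :
    Sparse A ↔
      ∀ p : Ultrafilter G, (∀ S ∈ p, (S : Set G).Infinite) →
        (companion p A).Finite := by
  classical
  constructor
  · intro hs p hp
    by_contra hinf
    have hX : ((companion p A)⁻¹ : Set G).Infinite := Set.infinite_inv.2 hinf
    obtain ⟨F, hFne, hFX, hFfin⟩ := hs _ hX
    have hmem : (⋂ g ∈ F, (g • A : Set G)) ∈ p := by
      rw [← Ultrafilter.mem_coe, Filter.biInter_finset_mem]
      intro g hg
      have : g ∈ ((companion p A)⁻¹ : Set G) := hFX hg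
      rw [Set.mem_inv] at this
      simpa [companion, Ultrafilter.mem_coe] using this
    exact hp _ hmem hFfin
  · intro hcomp
    by_contra hns
    rw [Sparse] at hns
    push_neg at hns
    obtain ⟨X, hXinf, hX⟩ := hns
    set S : Set (Set G) := {B | (∃ g ∈ X, B = g • A) ∨ Bᶜ.Finite} with hS
    have hgen : (Filter.generate S).NeBot := by
      rw [Filter.generate_neBot_iff]
      intro t htS htfin
      set t1 := {B ∈ t | ∃ g ∈ X, B = g • A} with ht1
      set t2 := {B ∈ t | Bᶜ.Finite} with ht2
      have htsub : t ⊆ t1 ∪ t2 := by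
        intro B hB
        rcases htS hB with h | h
        · exact Or.inl ⟨hB, h⟩
        · exact Or.inr ⟨hB, h⟩
      have ht2fin : (⋂₀ t2)ᶜ.Finite := by
        rw [Set.compl_sInter]
        apply Set.Finite.sUnion (((htfin.subset (Set.sep_subset _ _))).image _)
        rintro B ⟨C, hC, rfl⟩
        exact hC.2
      have ht1inf : (⋂₀ t1).Infinite := by
        have h1fin : t1.Finite := htfin.subset (Set.sep_subset _ _)
        have key : ∃ F : Finset G, ↑F ⊆ X ∧ (⋂ g ∈ F, (g • A : Set G)) = ⋂₀ t1 := by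
          refine Set.Finite.induction_on_subset (motive := fun u _ => ∃ F : Finset G, ↑F ⊆ X ∧ (⋂ g ∈ F, (g • A : Set G)) = ⋂₀ u) t1 h1fin ⟨∅, by simp⟩ ?_
          rintro B u hBt1 hut1 hBu ⟨F, hFX, hFeq⟩
          obtain ⟨g, hgX, rfl⟩ := hBt1.2
          refine ⟨insert g F, ?_, ?_⟩
          · rw [Finset.coe_insert, Set.insert_subset_iff]
            exact ⟨hgX, hFX⟩
          · rw [Set.sInter_insert, ← hFeq]
            simp
        obtain ⟨F, hFX, hFeq⟩ := key
        rw [← hFeq]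
        rcases F.eq_empty_or_nonempty with rfl | hFne
        · simpa using Set.infinite_univ
        · intro hfin
          exact hX F hFne hFX hfin
      have hne : (⋂₀ t1 ∩ ⋂₀ t2).Nonempty := by
        have h2 : ((⋂₀ t1) \ (⋂₀ t2)ᶜ).Infinite := ht1inf.diff ht2fin
        exact h2.nonempty.mono (by intro x hx; exact ⟨hx.1, by simpa using hx.2⟩)
      refine hne.mono ?_
      intro x hx
      rw [Set.mem_sInter]
      intro B hB
      rcases htsub hB with h | h
      · exact hx.1 B h
      · exact hx.2 B h
    obtain ⟨p, hp⟩ := Filter.exists_ultrafilter_le (Filter.generate S)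
    have hSp : ∀ B ∈ S, B ∈ p := fun B hB => hp (Filter.mem_generate_of_mem hB)
    have hfree : ∀ T ∈ p, (T : Set G).Infinite := by
      intro T hT
      by_contra h
      rw [Set.not_infinite] at h
      have : Tᶜ ∈ p := hSp Tᶜ (Or.inr (by simpa using h))
      exact (Ultrafilter.compl_notMem_iff.2 hT) this
    have hXsub : X⁻¹ ⊆ companion p A := by
      intro g hg
      rw [Set.mem_inv] at hg
      have : g⁻¹ • A ∈ p := hSp _ (Or.inl ⟨g⁻¹, hg, by simp⟩)
      simpa [companion] using this
    exact Set.infinite_inv.2 hXinf ((hcomp p hfree).subset hXsub)
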